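/- Let C_v be a digital simple closed curve with v even, v ≥ 4, and let f ∈ C(C_v,κ) be non-surjective. Then there is an index j such that 4·d_{(C_v,κ)}(x_j, f(x_j)) ≥ v − 2; in particular, f is not a D(v)-map. -/

import Mathlib

/-- A function between digital images (graphs) is digitally continuous if adjacent
points map to equal or adjacent points. -/
def DigContinuous {V W : Type*} (G : SimpleGraph V) (H : SimpleGraph W) (f : V → W) : Prop :=
  ∀ x y : V, G.Adj x y → f x = f y ∨ H.Adj (f x) (f y)

/-- `f` restricted to `A` is an `m`-map: it moves each point of `A` a graph distance of at
most `m`. -/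
def IsMMapOn {V : Type*} (G : SimpleGraph V) (f : V → V) (A : Set V) (m : ℕ) : Prop :=
  ∀ a ∈ A, G.dist a (f a) ≤ m

/-- `A` is an `(m,n)`-limiting set for `(X,κ)`: every continuous self-map whose restriction
to `A` is an `m`-map is an `n`-map. -/
def IsLimiting {V : Type*} (G : SimpleGraph V) (A : Set V) (m n : ℕ) : Prop :=
  ∀ f : V → V, DigContinuous G G f → IsMMapOn G f A m → IsMMapOn G f Set.univ n

/-- `A` is a minimal `(m,n)`-limiting set: it is limiting and no proper subset is. -/
def IsMinimalLimiting {V : Type*} (G : SimpleGraph V) (A : Set V) (m n : ℕ) : Prop :=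
  IsLimiting G A m n ∧ ∀ B : Set V, B ⊂ A → ¬ IsLimiting G B m n

/-- The digital simple closed curve (cycle) on `v` points, with vertex `x_i` modeled as
`(i : ZMod v)`: `x_i` and `x_j` are adjacent iff `i ≡ j ± 1 (mod v)` (and `i ≠ j`). -/
def cycG (v : ℕ) : SimpleGraph (ZMod v) where
  Adj i j := i ≠ j ∧ (i = j + 1 ∨ j = i + 1)
  symm := by
    constructor
    rintro i j ⟨hne, h⟩
    exact ⟨hne.symm, h.symm⟩
  loopless := by
    constructor
    rintro i ⟨hne, -⟩
    exact hne rfl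

/-- `D(v) = (v-2)/4 - 1` if `4 ∣ v-2`, else `⌊(v-2)/4⌋`. -/
def Dv (v : ℕ) : ℕ := if (v - 2) % 4 = 0 then (v - 2) / 4 - 1 else (v - 2) / 4

private lemma ivt (g : ℕ → ℤ) (hstep : ∀ k, g k ≤ g (k+1) + 2) :
    ∀ (n : ℕ) (T : ℤ), T ≤ g 0 → g n ≤ T + 1 → ∃ k, T ≤ g k ∧ g k ≤ T + 1 := by
  intro n
  induction n with
  | zero => intro T h0 hn; exact ⟨0, h0, hn⟩
  | succ n ih =>
    intro T h0 hn
    by_cases h : g n ≤ T + 1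
    · exact ih T h0 h
    · refine ⟨n+1, ?_, hn⟩
      have := hstep n
      omega

private def dvl (v : ℕ) (t : ZMod v) : ℕ := min t.val (v - t.val)

private lemma dvl_succ (v : ℕ) [NeZero v] [Fact (1 < v)] (t : ZMod v) :
    dvl v (t+1) ≤ dvl v t + 1 ∧ dvl v t ≤ dvl v (t+1) + 1 := by
  have hv1 : 1 < v := Fact.out
  have h1 : (t + 1).val = (t.val + 1) % v := by
    rw [ZMod.val_add, ZMod.val_one]
  have ht : t.val < v := ZMod.val_lt t
  unfold dvl
  rcases Nat.lt_or_ge (t.val + 1) v with h | h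
  · rw [h1, Nat.mod_eq_of_lt h]; omega
  · have h2 : t.val + 1 = v := by omega
    rw [h1, h2, Nat.mod_self]; omega

private lemma dvl_le_length (v : ℕ) [NeZero v] [Fact (1 < v)] :
    ∀ (x y : ZMod v) (p : (cycG v).Walk x y), dvl v (y - x) ≤ p.length := by
  intro x y p
  induction p with
  | nil => simp [dvl]
  | @cons u c w h q ih =>
    rw [SimpleGraph.Walk.length_cons]
    rcases h with ⟨-, h | h⟩
    · have := (dvl_succ v (w - u)).2
      have he : (w - u) + 1 = w - c := by rw [h]; ring
      rw [he] at this
      omega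
    · have := (dvl_succ v (w - c)).1
      have he : (w - c) + 1 = w - u := by rw [h]; ring
      rw [he] at this
      omega

private lemma adj_succ (v : ℕ) [NeZero v] [Fact (1 < v)] (x : ZMod v) :
    (cycG v).Adj x (x + 1) :=
  ⟨fun h => one_ne_zero (left_eq_add.mp h), Or.inr rfl⟩

private lemma reach_aux (v : ℕ) [NeZero v] [Fact (1 < v)] (x : ZMod v) (n : ℕ) :
    (cycG v).Reachable x (x + n) := by
  induction n with
  | zero => simp only [Nat.cast_zero, add_zero]; exact SimpleGraph.Reachable.refl x
  | succ n ih =>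
    have : ((n+1 : ℕ) : ZMod v) = (n : ZMod v) + 1 := by push_cast; ring
    rw [this, ← add_assoc]
    exact ih.trans (adj_succ v (x + n)).reachable

private lemma dist_lb (v : ℕ) [NeZero v] [Fact (1 < v)] (x y : ZMod v) :
    dvl v (y - x) ≤ (cycG v).dist x y := by
  have hr : (cycG v).Reachable x y := by
    have h2 : x + ((y - x).val : ZMod v) = y := by rw [ZMod.natCast_zmod_val]; ring
    have := reach_aux v x (y - x).val
    rwa [h2] at this
  obtain ⟨p, hp⟩ := hr.exists_walk_length_eq_dist
  rw [← hp]
  exact dvl_le_length v x y p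

private lemma val_succ (v : ℕ) [NeZero v] [Fact (1 < v)] (s t : ZMod v) (ht : t ≠ 0)
    (h : t = s + 1) : t.val = s.val + 1 := by
  have h1 : t.val = (s.val + 1) % v := by rw [h, ZMod.val_add, ZMod.val_one]
  have hs := ZMod.val_lt s
  rcases Nat.lt_or_ge (s.val + 1) v with h' | h'
  · rwa [Nat.mod_eq_of_lt h'] at h1
  · have h2 : s.val + 1 = v := by omega
    rw [h2, Nat.mod_self] at h1
    exact absurd ((ZMod.val_eq_zero t).mp h1) ht

private def privF (v : ℕ) (f : ZMod v → ZMod v) (p : ZMod v) (k : ℕ) : ℕ :=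
  (f (p + k) - p).val

private def privG (v : ℕ) (f : ZMod v → ZMod v) (p : ZMod v) (k : ℕ) : ℤ :=
  (privF v f p k : ℤ) - k

section Main

variable (v : ℕ) [NeZero v] [Fact (1 < v)] (f : ZMod v → ZMod v) (p : ZMod v)

private lemma privF_pos (hp : ∀ a, f a ≠ p) (k : ℕ) : 1 ≤ privF v f p k ∧ privF v f p k < v := by
  constructor
  · have : f (p + k) - p ≠ 0 := fun h => hp _ (sub_eq_zero.mp h)
    have := (ZMod.val_eq_zero (f (p + k) - p)).not.mpr this
    unfold privF; omega
  · exact ZMod.val_lt _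

private lemma key (hp : ∀ a, f a ≠ p) (hf : DigContinuous (cycG v) (cycG v) f) (x y : ZMod v)
    (hxy : (cycG v).Adj x y) :
    (f y - p).val ≤ (f x - p).val + 1 ∧ (f x - p).val ≤ (f y - p).val + 1 := by
  have hx0 : f x - p ≠ 0 := fun h => hp x (sub_eq_zero.mp h)
  have hy0 : f y - p ≠ 0 := fun h => hp y (sub_eq_zero.mp h)
  rcases hf x y hxy with h | ⟨-, h | h⟩
  · rw [h]; omega
  · have := val_succ v (f y - p) (f x - p) hx0 (by rw [h]; ring)
    omega
  · have := val_succ v (f x - p) (f y - p) hy0 (by rw [h]; ring)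
    omega

private lemma privG_step (hp : ∀ a, f a ≠ p) (hf : DigContinuous (cycG v) (cycG v) f) (k : ℕ) :
    privG v f p k ≤ privG v f p (k+1) + 2 ∧ privG v f p (k+1) ≤ privG v f p k := by
  have hcast : p + ((k+1 : ℕ) : ZMod v) = (p + k) + 1 := by push_cast; ring
  have h := key v f p hp hf (p + k) (p + ((k+1 : ℕ) : ZMod v))
    (by rw [hcast]; exact adj_succ v (p + k))
  unfold privG privF
  push_cast at h ⊢
  omega

private lemma privG_wrap (hp : ∀ a, f a ≠ p) (hv : 4 ≤ v) (hf : DigContinuous (cycG v) (cycG v) f) :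
    privF v f p 0 ≤ privF v f p (v-1) + 1 ∧ privF v f p (v-1) ≤ privF v f p 0 + 1 := by
  have hvv : (1:ℕ) < v := by omega
  have hcast : ((v - 1 : ℕ) : ZMod v) + 1 = 0 := by
    have : ((v - 1 : ℕ) : ZMod v) + 1 = ((v - 1 + 1 : ℕ) : ZMod v) := by push_cast; ring
    rw [this, show v - 1 + 1 = v by omega, ZMod.natCast_self]
  have hne : p + ((v - 1 : ℕ) : ZMod v) ≠ p := by
    intro h
    have h2 : ((v - 1 : ℕ) : ZMod v) = 0 := by
      have := congrArg (fun z => z - p) h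
      simpa [add_sub_cancel_left] using this
    have h3 := congrArg ZMod.val h2
    rw [ZMod.val_cast_of_lt (by omega : v - 1 < v), ZMod.val_zero] at h3
    omega
  have hadj : (cycG v).Adj (p + ((v - 1 : ℕ) : ZMod v)) p :=
    ⟨hne, Or.inr (by rw [add_assoc, hcast, add_zero])⟩
  have h := key v f p hp hf (p + ((v - 1 : ℕ) : ZMod v)) p hadj
  have h0 : p + ((0 : ℕ) : ZMod v) = p := by push_cast; ring
  unfold privF
  rw [h0]
  omega

private lemma hval_lemma (hv : 4 ≤ v) (k n : ℕ) (hn : n < v)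
    (h : ((privG v f p k : ℤ) : ZMod v) = ((n : ℕ) : ZMod v)) :
    min n (v - n) ≤ (cycG v).dist (p + k) (f (p + k)) := by
  have hj : f (p + (k : ℕ)) - (p + k) = ((privG v f p k : ℤ) : ZMod v) := by
    unfold privG privF
    push_cast [ZMod.natCast_zmod_val]
    ring
  have hd := dist_lb v (p + k) (f (p + k))
  rw [hj, h] at hd
  unfold dvl at hd
  rwa [ZMod.val_cast_of_lt hn] at hd

end Main

theorem stmt12 (v : ℕ) (hv : 4 ≤ v) (hev : Even v)
    (f : ZMod v → ZMod v) (hf : DigContinuous (cycG v) (cycG v) f)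
    (hns : ¬ Function.Surjective f) :
    (∃ j : ZMod v, v - 2 ≤ 4 * (cycG v).dist j (f j)) ∧
    ¬ (∀ x : ZMod v, (cycG v).dist x (f x) ≤ Dv v) := by
  haveI : NeZero v := ⟨by omega⟩
  haveI : Fact (1 < v) := ⟨by omega⟩
  obtain ⟨m, hm⟩ := hev
  have hm2 : 2 ≤ m := by omega
  rw [Function.Surjective] at hns
  push_neg at hns
  obtain ⟨p, hp⟩ := hns
  have hstep : ∀ k, privG v f p k ≤ privG v f p (k+1) + 2 :=
    fun k => (privG_step v f p hp hf k).1
  have ha := privF_pos v f p hp 0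
  have hb1 := privF_pos v f p hp (v-1)
  have hw := privG_wrap v f p hp hv hf
  have hg0 : privG v f p 0 = (privF v f p 0 : ℤ) := by simp [privG]
  have hgv : privG v f p (v-1) = (privF v f p (v-1) : ℤ) - ((v-1 : ℕ) : ℤ) := rfl
  have main : ∃ j : ZMod v, v - 2 ≤ 4 * (cycG v).dist j (f j) := by
    have hfind : ∃ (k n : ℕ), n < v ∧ ((privG v f p k : ℤ) : ZMod v) = ((n : ℕ) : ZMod v) ∧
        v - 2 ≤ 4 * min n (v - n) := by
      set a := privF v f p 0 with hadef
      rcases Nat.lt_or_ge a m with ham | ham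
      · rcases Nat.lt_or_ge (4 * a) (v - 2) with h4a | h4a
        · -- a < m and 4a < v - 2 : cross near -m
          obtain ⟨k, hk1, hk2⟩ := ivt (privG v f p) hstep (v-1) (-(m : ℤ))
            (by omega) (by omega)
          set n := (privG v f p k + v).toNat with hndef
          have hn1 : (n : ℤ) = privG v f p k + v := by omega
          refine ⟨k, n, by omega, ?_, by omega⟩
          have h1 : (privG v f p k : ℤ) = (n : ℤ) - (v : ℤ) := by omega
          rw [h1]
          push_cast
          simp
        · -- a < m and 4a ≥ v - 2 : use k = 0
          refine ⟨0, a, by omega, ?_, by omega⟩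
          rw [hg0, Int.cast_natCast]
      · -- a ≥ m : cross near m
        obtain ⟨k, hk1, hk2⟩ := ivt (privG v f p) hstep (v-1) ((m : ℤ) - 1)
          (by omega) (by omega)
        set n := (privG v f p k).toNat with hndef
        have hn1 : (n : ℤ) = privG v f p k := by omega
        refine ⟨k, n, by omega, ?_, by omega⟩
        rw [← hn1, Int.cast_natCast]
    obtain ⟨k, n, hn, hcast, hmin⟩ := hfind
    exact ⟨p + k, le_trans hmin (Nat.mul_le_mul_left 4 (hval_lemma v f p hv k n hn hcast))⟩
  refine ⟨main, fun h => ?_⟩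
  obtain ⟨j, hj⟩ := main
  have h2 := h j
  unfold Dv at h2
  split at h2 <;> omega
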